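/- arXiv:1606.05622 — 2 statements merged into one kernel-verified Lean document; each statement's English description precedes it below -/
import Mathlib

section
/- For every mass ratio μ with 0 < μ < 1/2, set l = (1 − 2√(μ(1−μ)))/(2(1−2μ)). Then 0 < l < 1/2, and a point q ∈ ℝ² ∖ {E, M} is a critical point of the Euler potential V_μ (i.e., the Fréchet derivative of V_μ at q vanishes) if and only if q = (l, 0). -/
/-- The position of the Earth: E = (-1/2, 0). -/
noncomputable def Earth : EuclideanSpace ℝ (Fin 2) := WithLp.toLp 2 ![-(1/2 : ℝ), 0]

/-- The position of the Moon: M = (1/2, 0). -/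
noncomputable def Moon : EuclideanSpace ℝ (Fin 2) := WithLp.toLp 2 ![(1/2 : ℝ), 0]

/-- The Euler potential V_μ(q) = -(1-μ)/‖q-E‖ - μ/‖q-M‖. -/
noncomputable def eulerPotential (μ : ℝ) (q : EuclideanSpace ℝ (Fin 2)) : ℝ :=
  -(1 - μ) / ‖q - Earth‖ - μ / ‖q - Moon‖

open Real

lemma hasFDerivAt_inv_norm_sub {E : Type*} [NormedAddCommGroup E] [InnerProductSpace ℝ E]
    (a q : E) (h : q ≠ a) :
    HasFDerivAt (fun x => ‖x - a‖⁻¹) (-(‖q - a‖ ^ 3)⁻¹ • (innerSL ℝ (q - a))) q := by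
  have hy : q - a ≠ 0 := sub_ne_zero.mpr h
  have hr : (0:ℝ) < ‖q - a‖ := norm_pos_iff.mpr hy
  have hsub : HasFDerivAt (fun x : E => x - a) (ContinuousLinearMap.id ℝ E) q :=
    (hasFDerivAt_id q).sub_const a
  have h1 : HasFDerivAt (fun x : E => ‖x - a‖ ^ 2)
      (2 • (innerSL ℝ (q - a))) q := by
    simpa using hsub.norm_sq
  have h2 : HasFDerivAt (fun x : E => √(‖x - a‖ ^ 2))
      ((1 / (2 * √(‖q - a‖ ^ 2))) • (2 • (innerSL ℝ (q - a)))) q :=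
    h1.sqrt (by positivity)
  have h2' : HasFDerivAt (fun x : E => ‖x - a‖)
      ((1 / (2 * ‖q - a‖)) • (2 • (innerSL ℝ (q - a)))) q := by
    have e1 : (fun x : E => √(‖x - a‖ ^ 2)) = fun x : E => ‖x - a‖ := by
      funext x; exact Real.sqrt_sq (norm_nonneg _)
    have e2 : √(‖q - a‖ ^ 2) = ‖q - a‖ := Real.sqrt_sq (norm_nonneg _)
    rw [e1, e2] at h2; exact h2
  have h3 := (hasDerivAt_inv hr.ne').comp_hasFDerivAt q h2'
  refine h3.congr_fderiv ?_
  ext v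
  simp only [ContinuousLinearMap.smul_apply, ContinuousLinearMap.coe_smul', Pi.smul_apply,
    smul_eq_mul]
  field_simp
  ring

lemma hasFDerivAt_eulerPotential (μ : ℝ) (q : EuclideanSpace ℝ (Fin 2))
    (hE : q ≠ Earth) (hM : q ≠ Moon) :
    HasFDerivAt (eulerPotential μ)
      (innerSL ℝ (((1 - μ) * (‖q - Earth‖ ^ 3)⁻¹) • (q - Earth)
        + (μ * (‖q - Moon‖ ^ 3)⁻¹) • (q - Moon))) q := by
  have h1 := (hasFDerivAt_inv_norm_sub Earth q hE).const_mul (-(1 - μ))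
  have h2 := (hasFDerivAt_inv_norm_sub Moon q hM).const_mul μ
  have h3 := h1.sub h2
  have he : eulerPotential μ = fun x => -(1 - μ) * ‖x - Earth‖⁻¹ - μ * ‖x - Moon‖⁻¹ := by
    funext x; simp [eulerPotential, div_eq_mul_inv]
  rw [he]
  refine h3.congr_fderiv ?_
  rw [map_add, map_smul, map_smul]
  ext v
  simp only [ContinuousLinearMap.add_apply, ContinuousLinearMap.smul_apply,
    ContinuousLinearMap.coe_sub', Pi.sub_apply, ContinuousLinearMap.coe_smul', Pi.smul_apply,
    smul_eq_mul]
  ring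

lemma l_props (μ : ℝ) (hμ0 : 0 < μ) (hμ1 : μ < 1/2)
    (l : ℝ) (hl : l = (1 - 2 * Real.sqrt (μ * (1 - μ))) / (2 * (1 - 2 * μ))) :
    0 < l ∧ l < 1/2 ∧ (1 - μ) * (1/2 - l)^2 = μ * (1/2 + l)^2 := by
  set s := Real.sqrt μ with hs
  set t := Real.sqrt (1 - μ) with ht
  have hμ1' : μ < 1 - μ := by linarith
  have hs2 : s ^ 2 = μ := Real.sq_sqrt hμ0.le
  have ht2 : t ^ 2 = 1 - μ := Real.sq_sqrt (by linarith)
  have hspos : 0 < s := Real.sqrt_pos.mpr hμ0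
  have htpos : 0 < t := Real.sqrt_pos.mpr (by linarith)
  have hst : s < t := Real.sqrt_lt_sqrt hμ0.le hμ1'
  have hsqrt : Real.sqrt (μ * (1 - μ)) = s * t := by
    rw [hs, ht, ← Real.sqrt_mul hμ0.le]
  have hl' : l = (t - s) / (2 * (t + s)) := by
    rw [hl, hsqrt, div_eq_div_iff (by nlinarith) (by positivity)]
    nlinarith [sq_nonneg (t - s), sq_nonneg (t + s)]
  have hlpos : 0 < l := by
    rw [hl']; apply div_pos (by linarith) (by positivity)
  have hlhalf : l < 1/2 := by
    rw [hl', div_lt_iff₀ (by positivity)]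
    nlinarith
  refine ⟨hlpos, hlhalf, ?_⟩
  have h12 : 1/2 - l = s / (t + s) := by
    rw [hl', eq_div_iff (by positivity)]; field_simp; ring
  have h12' : 1/2 + l = t / (t + s) := by
    rw [hl', eq_div_iff (by positivity)]; field_simp; ring
  rw [h12, h12', div_pow, div_pow]
  have hts : (t + s) ^ 2 ≠ 0 := by positivity
  field_simp
  nlinarith

lemma aux_div (c u : ℝ) (h : u ≠ 0) : c * (u ^ 3)⁻¹ * u = c / u ^ 2 := by
  field_simp

lemma euclidean_norm_two (v : EuclideanSpace ℝ (Fin 2)) :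
    ‖v‖ = Real.sqrt (v 0 ^ 2 + v 1 ^ 2) := by
  rw [EuclideanSpace.norm_eq, Fin.sum_univ_two]
  simp [Real.norm_eq_abs, sq_abs]

set_option maxHeartbeats 1000000 in
/-- For 0 < μ < 1/2 and l = (1 - 2√(μ(1-μ)))/(2(1-2μ)), we have 0 < l < 1/2, and a
point q ∈ ℝ² ∖ {E, M} is a critical point of V_μ iff q = (l, 0). -/
theorem euler_potential_critical_point (μ : ℝ) (hμ0 : 0 < μ) (hμ1 : μ < 1/2)
    (l : ℝ) (hl : l = (1 - 2 * Real.sqrt (μ * (1 - μ))) / (2 * (1 - 2 * μ))) :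
    (0 < l ∧ l < 1/2) ∧
    ∀ q : EuclideanSpace ℝ (Fin 2), q ≠ Earth → q ≠ Moon →
      (fderiv ℝ (eulerPotential μ) q = 0 ↔ q = ![l, 0]) := by
  obtain ⟨hl0, hl2, hleq⟩ := l_props μ hμ0 hμ1 l hl
  refine ⟨⟨hl0, hl2⟩, ?_⟩
  intro q hE hM
  have hμ1'' : 0 < 1 - μ := by linarith
  -- notation
  set r1 := ‖q - Earth‖ with hr1def
  set r2 := ‖q - Moon‖ with hr2def
  have hr1 : 0 < r1 := norm_pos_iff.mpr (sub_ne_zero.mpr hE)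
  have hr2 : 0 < r2 := norm_pos_iff.mpr (sub_ne_zero.mpr hM)
  set c1 := (1 - μ) * (r1 ^ 3)⁻¹ with hc1def
  set c2 := μ * (r2 ^ 3)⁻¹ with hc2def
  have hc1 : 0 < c1 := by positivity
  have hc2 : 0 < c2 := by positivity
  set w : EuclideanSpace ℝ (Fin 2) := c1 • (q - Earth) + c2 • (q - Moon) with hwdef
  have hD : fderiv ℝ (eulerPotential μ) q = innerSL ℝ w :=
    (hasFDerivAt_eulerPotential μ q hE hM).fderiv
  have hE0 : Earth 0 = -(1/2 : ℝ) := rfl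
  have hE1 : Earth 1 = (0 : ℝ) := rfl
  have hM0 : Moon 0 = (1/2 : ℝ) := rfl
  have hM1 : Moon 1 = (0 : ℝ) := rfl
  have hw0 : w 0 = c1 * (q 0 + 1/2) + c2 * (q 0 - 1/2) := by
    simp only [hwdef, PiLp.add_apply, PiLp.smul_apply, PiLp.sub_apply, hE0, hM0, smul_eq_mul]
    ring
  have hw1 : w 1 = (c1 + c2) * q 1 := by
    simp only [hwdef, PiLp.add_apply, PiLp.smul_apply, PiLp.sub_apply, hE1, hM1, smul_eq_mul]
    ring
  -- the key equivalence : fderiv = 0 ↔ w = 0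
  have hiff : fderiv ℝ (eulerPotential μ) q = 0 ↔ w = 0 := by
    rw [hD]
    constructor
    · intro h
      have : (innerSL ℝ w) w = 0 := by rw [h]; rfl
      have : (inner ℝ w w : ℝ) = 0 := this
      exact inner_self_eq_zero.mp this
    · intro h; rw [h]; exact map_zero _
  clear_value r1 r2 c1 c2 w
  rw [hiff]
  constructor
  · -- w = 0 → q = ![l, 0]
    intro hw
    have h1 : q 1 = 0 := by
      have : w 1 = (0 : EuclideanSpace ℝ (Fin 2)) 1 := by rw [hw]
      rw [hw1] at this
      have hc12 : 0 < c1 + c2 := by linarith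
      simpa [hc12.ne'] using this
    have h0 : c1 * (q 0 + 1/2) + c2 * (q 0 - 1/2) = 0 := by
      have : w 0 = (0 : EuclideanSpace ℝ (Fin 2)) 0 := by rw [hw]
      rw [hw0] at this; simpa using this
    set x := q 0 with hx
    -- compute the norms
    have hr1x : r1 = |x + 1/2| := by
      rw [hr1def, euclidean_norm_two]
      simp only [PiLp.sub_apply, hE0, hE1, h1]
      rw [show x - -(1/2 : ℝ) = x + 1/2 by ring]
      simp [Real.sqrt_sq_eq_abs]
    have hr2x : r2 = |x - 1/2| := by
      rw [hr2def, euclidean_norm_two]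
      simp only [PiLp.sub_apply, hM0, hM1, h1]
      simp [Real.sqrt_sq_eq_abs]
      rfl
    clear_value x
    clear hw hiff hD hwdef hw0 hw1 hE hM hl hr1def hr2def
    have hxne1 : x ≠ -(1/2 : ℝ) := by
      intro hcon
      rw [hr1x, hcon] at hr1; simp at hr1
    have hxne2 : x ≠ (1/2 : ℝ) := by
      intro hcon
      rw [hr2x, hcon] at hr2; simp at hr2
    -- x must lie strictly between -1/2 and 1/2
    have hxlt : x < 1/2 := by
      by_contra hcon
      push_neg at hcon
      have hgt : (1:ℝ)/2 < x := lt_of_le_of_ne hcon (Ne.symm hxne2)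
      nlinarith
    have hxgt : -(1/2 : ℝ) < x := by
      by_contra hcon
      push_neg at hcon
      have hlt : x < -(1/2 : ℝ) := lt_of_le_of_ne hcon hxne1
      nlinarith
    have hr1v : r1 = x + 1/2 := by rw [hr1x, abs_of_pos (by linarith)]
    have hr2v : r2 = 1/2 - x := by rw [hr2x, abs_of_neg (by linarith)]; ring
    -- derive the algebraic equation for x
    have hp1 : (0:ℝ) < x + 1/2 := by linarith
    have hp2 : (0:ℝ) < 1/2 - x := by linarith
    have ha : c1 * (x + 1/2) = (1 - μ) / (x + 1/2)^2 := by
      rw [hc1def, hr1v]; exact aux_div _ _ hp1.ne'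
    have hb : c2 * (1/2 - x) = μ / (1/2 - x)^2 := by
      rw [hc2def, hr2v]; exact aux_div _ _ hp2.ne'
    have hab : (1 - μ) / (x + 1/2)^2 = μ / (1/2 - x)^2 := by
      rw [← ha, ← hb]; linarith
    rw [div_eq_div_iff (by positivity) (by positivity)] at hab
    have heq : (1 - μ) * (1/2 - x)^2 = μ * (1/2 + x)^2 := by
      linear_combination hab
    -- uniqueness: x = l
    have hfac : (l - x) * ((1 - μ) * (1 - x - l) + μ * (1 + x + l)) = 0 := by
      linear_combination heq - hleq
    have hbr : 0 < (1 - μ) * (1 - x - l) + μ * (1 + x + l) := by nlinarith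
    have hxl : x = l := by
      rcases mul_eq_zero.mp hfac with h | h
      · linarith
      · linarith
    funext i
    fin_cases i
    · simpa [← hx] using hxl
    · simpa using h1
  · -- q = ![l, 0] → w = 0
    intro hq
    have hq0 : q 0 = l := by rw [hq]; rfl
    have hq1 : q 1 = (0:ℝ) := by rw [hq]; rfl
    have hr1v : r1 = l + 1/2 := by
      rw [hr1def, euclidean_norm_two]
      simp only [PiLp.sub_apply, hE0, hE1, hq0, hq1]
      rw [show l - -(1/2 : ℝ) = l + 1/2 by ring]
      rw [show (0:ℝ) - 0 = 0 by ring]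
      rw [show (l + 1/2)^2 + 0^2 = (l+1/2)^2 by ring]
      rw [Real.sqrt_sq (by linarith)]
    have hr2v : r2 = 1/2 - l := by
      rw [hr2def, euclidean_norm_two]
      simp only [PiLp.sub_apply, hM0, hM1, hq0, hq1]
      rw [show (0:ℝ) - 0 = 0 by ring]
      rw [show (l - 1/2)^2 + 0^2 = (1/2 - l)^2 by ring]
      rw [Real.sqrt_sq (by linarith)]
    clear hiff hD hwdef hE hM hq hl hr1def hr2def
    apply PiLp.ext
    intro i
    have hp1 : (0:ℝ) < l + 1/2 := by linarith
    have hp2 : (0:ℝ) < 1/2 - l := by linarith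
    fin_cases i
    · show w 0 = 0
      rw [hw0, hq0, hc1def, hc2def, hr1v, hr2v]
      have t1 := aux_div (1 - μ) (l + 1/2) hp1.ne'
      have t2 := aux_div μ (1/2 - l) hp2.ne'
      have hdd : (1 - μ) / (l + 1/2)^2 = μ / (1/2 - l)^2 := by
        rw [div_eq_div_iff (by positivity) (by positivity)]
        linear_combination hleq
      linear_combination t1 - t2 + hdd
    · show w 1 = 0
      rw [hw1, hq1, mul_zero]
end

section
/- Let c, g be real numbers with c ≠ 0, and consider the real polynomial f(X) = (cX² + 2X + g)(X² − 1). Then f is squarefree (equivalently, f has no repeated root in ℂ) if and only if c + g + 2 ≠ 0, c + g − 2 ≠ 0, and gc ≠ 1. Equivalently, f has a repeated root precisely when (c+g+2)(c+g−2)(gc−1) = 0. -/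
open Polynomial

private lemma euler_aux_sep (c g : ℝ) (h3 : g * c ≠ 1) :
    (C c * X ^ 2 + 2 * X + C g : ℝ[X]).Separable := by
  have hd : derivative (C c * X ^ 2 + 2 * X + C g : ℝ[X]) = C (2*c) * X + 2 := by
    simp [derivative_C, map_mul]; rw [map_ofNat C 2]; ring
  have hk : (2 : ℝ) - 2*c*g ≠ 0 := by intro h; apply h3; nlinarith
  refine ⟨C ((2 - 2*c*g)⁻¹) * C (-2*c), C ((2 - 2*c*g)⁻¹) * (1 + C c * X), ?_⟩
  rw [hd]
  have key : (C (-2*c)) * (C c * X ^ 2 + 2 * X + C g) + (1 + C c * X) * (C (2*c) * X + 2)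
      = C (2 - 2*c*g) := by
    simp only [map_mul, map_sub, map_neg, map_ofNat, map_add]; ring
  calc C ((2 - 2*c*g)⁻¹) * C (-2*c) * (C c * X ^ 2 + 2 * X + C g)
        + C ((2 - 2*c*g)⁻¹) * (1 + C c * X) * (C (2*c) * X + 2)
      = C ((2 - 2*c*g)⁻¹) * (C (-2*c) * (C c * X ^ 2 + 2 * X + C g)
        + (1 + C c * X) * (C (2*c) * X + 2)) := by ring
    _ = 1 := by rw [key, ← C_mul, inv_mul_cancel₀ hk, C_1]

/-- Bezout-style coprimality: if `k = a*P + b*L ≠ 0` then `IsCoprime P L`. -/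
private lemma euler_aux_coprime {P L a b : ℝ[X]} {k : ℝ} (hk : k ≠ 0)
    (h : a * P + b * L = C k) : IsCoprime P L := by
  refine ⟨C k⁻¹ * a, C k⁻¹ * b, ?_⟩
  calc C k⁻¹ * a * P + C k⁻¹ * b * L = C k⁻¹ * (a * P + b * L) := by ring
    _ = 1 := by rw [h, ← C_mul, inv_mul_cancel₀ hk, C_1]

private lemma euler_aux_sf (c g : ℝ) (_hc : c ≠ 0) (h1 : c + g + 2 ≠ 0)
    (h2 : c + g - 2 ≠ 0) (h3 : g * c ≠ 1) :
    Squarefree ((C c * X ^ 2 + 2 * X + C g : ℝ[X]) * (X ^ 2 - 1)) := by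
  set P : ℝ[X] := C c * X ^ 2 + 2 * X + C g with hP
  have hfac : (X ^ 2 - 1 : ℝ[X]) = (X - C 1) * (X - C (-1)) := by
    simp only [map_one, map_neg]; ring
  have cop1 : IsCoprime P (X - C 1) := by
    refine euler_aux_coprime h1 (a := 1) (b := -(C c * X + C (c + 2))) ?_
    simp only [hP, map_add, map_ofNat, map_one, map_neg]; ring
  have cop2 : IsCoprime P (X - C (-1)) := by
    refine euler_aux_coprime h2 (a := 1) (b := -(C c * X + C (2 - c))) ?_
    simp only [hP, map_add, map_sub, map_ofNat, map_one, map_neg]; ring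
  have copQ : IsCoprime P (X ^ 2 - 1 : ℝ[X]) := by
    rw [hfac]; exact cop1.mul_right cop2
  have sepQ : (X ^ 2 - 1 : ℝ[X]).Separable := by
    rw [hfac]
    exact (separable_X_sub_C).mul (separable_X_sub_C)
      (isCoprime_X_sub_C_of_isUnit_sub (by norm_num))
  exact ((euler_aux_sep c g h3).mul sepQ copQ).squarefree

private lemma euler_aux_root (c g : ℝ) (hc : c ≠ 0)
    (h : (c + g + 2) * (c + g - 2) * (g * c - 1) = 0) :
    ∃ r : ℝ, (X - C r) ^ 2 ∣ ((C c * X ^ 2 + 2 * X + C g : ℝ[X]) * (X ^ 2 - 1)) := by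
  rcases mul_eq_zero.1 h with h' | h3
  · rcases mul_eq_zero.1 h' with h1 | h2
    · refine ⟨1, (C c * X + C (c + 2)) * (X + 1), ?_⟩
      have hg : g = -c - 2 := by linarith
      subst hg
      simp only [map_add, map_sub, map_neg, map_ofNat, map_one]; ring
    · refine ⟨-1, (C c * X + C (2 - c)) * (X - 1), ?_⟩
      have hg : g = 2 - c := by linarith
      subst hg
      simp only [map_add, map_sub, map_neg, map_ofNat, map_one]; ring
  · refine ⟨-c⁻¹, C c * (X ^ 2 - 1), ?_⟩
    have hg : g = c⁻¹ := by field_simp; linarith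
    subst hg
    have hcc : (C c : ℝ[X]) * C c⁻¹ = 1 := by
      rw [← C_mul, mul_inv_cancel₀ hc, C_1]
    have hPP : (C c * X ^ 2 + 2 * X + C c⁻¹ : ℝ[X]) = C c * (X - C (-c⁻¹)) ^ 2 := by
      simp only [map_neg]
      linear_combination (-2 * X - C c⁻¹) * hcc
    rw [hPP]; ring

/-- The quartic f(X) = (cX² + 2X + g)(X² - 1) governing the ξ-motion of the Euler
problem is squarefree (equivalently, has no repeated complex root) if and only if
c + g + 2 ≠ 0, c + g - 2 ≠ 0 and gc ≠ 1; i.e. f has a repeated root precisely when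
(c+g+2)(c+g-2)(gc-1) = 0. -/
theorem euler_xi_quartic_squarefree_iff (c g : ℝ) (hc : c ≠ 0) :
    (Squarefree ((C c * X ^ 2 + 2 * X + C g) * (X ^ 2 - 1)) ↔
      (c + g + 2 ≠ 0 ∧ c + g - 2 ≠ 0 ∧ g * c ≠ 1)) ∧
    ((∃ z : ℂ, (X - C z) ^ 2 ∣
        ((C c * X ^ 2 + 2 * X + C g) * (X ^ 2 - 1)).map (algebraMap ℝ ℂ)) ↔
      (c + g + 2) * (c + g - 2) * (g * c - 1) = 0) := by
  set f : ℝ[X] := (C c * X ^ 2 + 2 * X + C g) * (X ^ 2 - 1) with hf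
  have hns : ∀ h : (c + g + 2) * (c + g - 2) * (g * c - 1) = 0, ¬ Squarefree f := by
    intro h hsq
    obtain ⟨r, q, hr⟩ := euler_aux_root c g hc h
    exact not_isUnit_X_sub_C r (hsq (X - C r) ⟨q, by rw [hf, hr]; ring⟩)
  have hiff : Squarefree f ↔ (c + g + 2 ≠ 0 ∧ c + g - 2 ≠ 0 ∧ g * c ≠ 1) := by
    constructor
    · intro hsq
      refine ⟨fun h1 => hns (by rw [h1]; ring) hsq,
        fun h2 => hns (by rw [h2]; ring) hsq,
        fun h3 => hns (by rw [sub_eq_zero.2 h3]; ring) hsq⟩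
    · rintro ⟨h1, h2, h3⟩; exact euler_aux_sf c g hc h1 h2 h3
  refine ⟨hiff, ?_, ?_⟩
  · rintro ⟨z, hz⟩
    by_contra h
    have hD : c + g + 2 ≠ 0 ∧ c + g - 2 ≠ 0 ∧ g * c ≠ 1 := by
      refine ⟨?_, ?_, ?_⟩ <;> intro h' <;> apply h
      · rw [h']; ring
      · rw [h']; ring
      · rw [sub_eq_zero.2 h']; ring
    have hsf : Squarefree (f.map (algebraMap ℝ ℂ)) := by
      rw [← PerfectField.separable_iff_squarefree, separable_map,
        PerfectField.separable_iff_squarefree]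
      exact hiff.2 hD
    exact not_isUnit_X_sub_C z (hsf (X - C z) (by rwa [← sq]))
  · intro h
    obtain ⟨r, hr⟩ := euler_aux_root c g hc h
    refine ⟨algebraMap ℝ ℂ r, ?_⟩
    have h2 := Polynomial.map_dvd (algebraMap ℝ ℂ) hr
    rwa [Polynomial.map_pow, Polynomial.map_sub, map_X, map_C] at h2
end
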